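/- Let p be a prime. If X ⊆ R^k and Y ⊆ R^m are finite Euclidean sub-p-toral sets, then the Cartesian product X × Y ⊆ R^k × R^m = R^{k+m} is Euclidean sub-p-toral. -/

import Mathlib

/-- A finite set `X ⊆ ℝ^k` is *Euclidean sub-p-toral* if some isometric copy of `X`
in a possibly larger `ℝ^n` is contained in an orbit of a finite group of isometries
of `ℝ^n` isomorphic to `(ℤ/p)^α`. -/
def EuclideanSubPToral (p : ℕ) {k : ℕ} (X : Set (EuclideanSpace ℝ (Fin k))) : Prop :=
  ∃ n : ℕ, k ≤ n ∧
    ∃ ι : X → EuclideanSpace ℝ (Fin n),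
      (∀ x y : X, dist (ι x) (ι y) = dist (x : EuclideanSpace ℝ (Fin k)) y) ∧
      ∃ (G : Subgroup (EuclideanSpace ℝ (Fin n) ≃ᵢ EuclideanSpace ℝ (Fin n))) (α : ℕ),
        Nonempty (G ≃* Multiplicative (Fin α → ZMod p)) ∧
        ∃ v : EuclideanSpace ℝ (Fin n), ∀ x : X, ∃ g ∈ G,
          (g : EuclideanSpace ℝ (Fin n) ≃ᵢ EuclideanSpace ℝ (Fin n)) v = ι x

/-- The identification `ℝ^k × ℝ^m = ℝ^{k+m}`. -/
noncomputable def prodPoint {k m : ℕ} (x : EuclideanSpace ℝ (Fin k))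
    (y : EuclideanSpace ℝ (Fin m)) : EuclideanSpace ℝ (Fin (k + m)) :=
  (WithLp.equiv 2 (Fin (k + m) → ℝ)).symm
    (fun i => Sum.elim ((WithLp.equiv 2 (Fin k → ℝ)) x) ((WithLp.equiv 2 (Fin m → ℝ)) y)
      (finSumFinEquiv.symm i))


open scoped ENNReal

noncomputable section

lemma prodL2_dist {α β : Type*} [Dist α] [Dist β] (f g : WithLp 2 (α × β)) :
    dist f g = Real.sqrt (dist f.fst g.fst ^ 2 + dist f.snd g.snd ^ 2) := by
  rw [WithLp.prod_dist_eq_add (by norm_num), Real.sqrt_eq_rpow]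
  norm_num

/-- The isometry `ℝ^{n+n'} ≃ᵢ WithLp 2 (ℝ^n × ℝ^{n'})`. -/
def euclidSumIsom (n n' : ℕ) :
    EuclideanSpace ℝ (Fin (n + n')) ≃ᵢ
      WithLp 2 (EuclideanSpace ℝ (Fin n) × EuclideanSpace ℝ (Fin n')) where
  toFun z := WithLp.toLp 2 (WithLp.toLp 2 (fun i => z (finSumFinEquiv (Sum.inl i))),
              WithLp.toLp 2 (fun j => z (finSumFinEquiv (Sum.inr j))))
  invFun w := WithLp.toLp 2 fun i => Sum.elim (w.fst : EuclideanSpace ℝ (Fin n)).ofLp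
      (w.snd : EuclideanSpace ℝ (Fin n')).ofLp (finSumFinEquiv.symm i)
  left_inv z := by
    ext i
    simp only [WithLp.ofLp_toLp, WithLp.toLp_fst, WithLp.toLp_snd]
    have h : ∀ s : Fin n ⊕ Fin n',
        Sum.elim (fun a => z (finSumFinEquiv (Sum.inl a)))
          (fun b => z (finSumFinEquiv (Sum.inr b))) s = z (finSumFinEquiv s) := by
      rintro (a | b) <;> rfl
    rw [h, Equiv.apply_symm_apply]
  right_inv w := by
    refine (WithLp.ext_iff 2).2 (Prod.ext ?_ ?_) <;> ext a <;>
      simp [Equiv.symm_apply_apply]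
  isometry_toFun := by
    refine Isometry.of_dist_eq fun z w => ?_
    rw [prodL2_dist]
    simp only [EuclideanSpace.dist_eq, WithLp.ofLp_toLp, WithLp.toLp_fst, WithLp.toLp_snd]
    rw [Real.sq_sqrt (by positivity), Real.sq_sqrt (by positivity)]
    rw [← Fintype.sum_sum_type (fun s : Fin n ⊕ Fin n' =>
      dist (z (finSumFinEquiv s)) (w (finSumFinEquiv s)) ^ 2)]
    rw [Equiv.sum_comp finSumFinEquiv (fun i => dist (z i) (w i) ^ 2)]

lemma prodPoint_eq {k m : ℕ} (x : EuclideanSpace ℝ (Fin k)) (y : EuclideanSpace ℝ (Fin m)) :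
    prodPoint x y = (euclidSumIsom k m).symm (WithLp.toLp 2 (x, y) :
      WithLp 2 (EuclideanSpace ℝ (Fin k) × EuclideanSpace ℝ (Fin m))) := rfl

lemma dist_prodPoint {k m : ℕ} (x x' : EuclideanSpace ℝ (Fin k))
    (y y' : EuclideanSpace ℝ (Fin m)) :
    dist (prodPoint x y) (prodPoint x' y') = Real.sqrt (dist x x' ^ 2 + dist y y' ^ 2) := by
  rw [prodPoint_eq, prodPoint_eq, (euclidSumIsom k m).symm.dist_eq,
    prodL2_dist, WithLp.toLp_fst, WithLp.toLp_fst, WithLp.toLp_snd, WithLp.toLp_snd]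

/-- product of two self-isometries, as a self-isometry of the `L²` product. -/
def prodIsom {A B : Type*} [MetricSpace A] [MetricSpace B]
    (f : A ≃ᵢ A) (g : B ≃ᵢ B) : WithLp 2 (A × B) ≃ᵢ WithLp 2 (A × B) where
  toFun z := WithLp.toLp 2 (f z.fst, g z.snd)
  invFun z := WithLp.toLp 2 (f.symm z.fst, g.symm z.snd)
  left_inv z := by simp; rfl
  right_inv z := by simp; rfl
  isometry_toFun := Isometry.of_dist_eq fun z w => by
    rw [prodL2_dist, prodL2_dist]
    simp [f.dist_eq, g.dist_eq]

/-- `prodIsom` as a monoid hom. -/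
def prodIsomHom (A B : Type*) [MetricSpace A] [MetricSpace B] :
    (A ≃ᵢ A) × (B ≃ᵢ B) →* (WithLp 2 (A × B) ≃ᵢ WithLp 2 (A × B)) where
  toFun fg := prodIsom fg.1 fg.2
  map_one' := by ext z <;> rfl
  map_mul' f g := by ext z <;> rfl

lemma prodIsomHom_injective (A B : Type*) [MetricSpace A] [MetricSpace B]
    [Nonempty A] [Nonempty B] : Function.Injective (prodIsomHom A B) := by
  rintro ⟨f, g⟩ ⟨f', g'⟩ h
  obtain ⟨a⟩ := ‹Nonempty A›; obtain ⟨b⟩ := ‹Nonempty B›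
  refine Prod.ext ?_ ?_
  · ext a'
    have := congrArg (fun k : WithLp 2 (A × B) ≃ᵢ WithLp 2 (A × B) =>
      (k (WithLp.toLp 2 (a', b))).fst) h
    exact this
  · ext b'
    have := congrArg (fun k : WithLp 2 (A × B) ≃ᵢ WithLp 2 (A × B) =>
      (k (WithLp.toLp 2 (a, b'))).snd) h
    exact this

/-- conjugation of the isometry group by a fixed isometry. -/
def conjIsomHom {A B : Type*} [PseudoEMetricSpace A] [PseudoEMetricSpace B]
    (e : A ≃ᵢ B) : (A ≃ᵢ A) →* (B ≃ᵢ B) where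
  toFun g := (e.symm.trans g).trans e
  map_one' := by ext x; simp
  map_mul' g h := by
    ext x
    simp [IsometryEquiv.mul_apply, IsometryEquiv.trans_apply]

lemma conjIsomHom_injective {A B : Type*} [PseudoEMetricSpace A] [PseudoEMetricSpace B]
    (e : A ≃ᵢ B) : Function.Injective (conjIsomHom e) := by
  intro g g' h
  ext x
  have := congrArg (fun k : B ≃ᵢ B => e.symm (k (e x))) h
  simpa [conjIsomHom, IsometryEquiv.trans_apply] using this

/-- Additive equivalence splitting `Fin (α+β) → ZMod p`. -/
def finAddArrowAddEquiv (p α β : ℕ) :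
    ((Fin α → ZMod p) × (Fin β → ZMod p)) ≃+ (Fin (α + β) → ZMod p) where
  toEquiv := ((Equiv.sumArrowEquivProdArrow _ _ _).symm.trans
    (Equiv.arrowCongr finSumFinEquiv (Equiv.refl _)))
  map_add' f g := by
    funext i
    rcases h : finSumFinEquiv.symm i with a | b <;>
      simp [Equiv.arrowCongr, Equiv.sumArrowEquivProdArrow, h]

end
/-- **Lemma 5.** If `X ⊆ ℝ^k` and `Y ⊆ ℝ^m` are finite Euclidean sub-p-toral sets, then
so is the Cartesian product `X × Y ⊆ ℝ^{k+m}`. -/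
theorem euclideanSubPToral_prod (p : ℕ) (hp : p.Prime) {k m : ℕ}
    (X : Set (EuclideanSpace ℝ (Fin k))) (Y : Set (EuclideanSpace ℝ (Fin m)))
    (hXfin : X.Finite) (hYfin : Y.Finite)
    (hX : EuclideanSubPToral p X) (hY : EuclideanSubPToral p Y) :
    EuclideanSubPToral p {z : EuclideanSpace ℝ (Fin (k + m)) |
      ∃ x ∈ X, ∃ y ∈ Y, z = prodPoint x y} := by
  classical
  obtain ⟨n1, hkn1, ι1, hι1, G1, α1, ⟨e1⟩, v1, hv1⟩ := hX
  obtain ⟨n2, hmn2, ι2, hι2, G2, α2, ⟨e2⟩, v2, hv2⟩ := hY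
  refine ⟨n1 + n2, Nat.add_le_add hkn1 hmn2, ?_⟩
  have hchoice : ∀ z : {z : EuclideanSpace ℝ (Fin (k + m)) |
      ∃ x ∈ X, ∃ y ∈ Y, z = prodPoint x y},
      ∃ (x : X) (y : Y), (z : EuclideanSpace ℝ (Fin (k + m))) =
        prodPoint (x : EuclideanSpace ℝ (Fin k)) (y : EuclideanSpace ℝ (Fin m)) := by
    rintro ⟨z, hz⟩
    obtain ⟨x, hx, y, hy, rfl⟩ := hz
    exact ⟨⟨x, hx⟩, ⟨y, hy⟩, rfl⟩
  choose fx fy hf using hchoice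
  set E := euclidSumIsom n1 n2 with hE
  refine ⟨fun z => E.symm (WithLp.toLp 2 (ι1 (fx z), ι2 (fy z)) :
    WithLp 2 (EuclideanSpace ℝ (Fin n1) × EuclideanSpace ℝ (Fin n2))), ?_, ?_⟩
  · intro z w
    dsimp only
    rw [E.symm.dist_eq, prodL2_dist]
    show Real.sqrt (dist (ι1 (fx z)) (ι1 (fx w)) ^ 2 + dist (ι2 (fy z)) (ι2 (fy w)) ^ 2) = _
    rw [hι1, hι2, ← dist_prodPoint, ← hf z, ← hf w]
  · set φ : ((EuclideanSpace ℝ (Fin n1) ≃ᵢ EuclideanSpace ℝ (Fin n1)) ×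
        (EuclideanSpace ℝ (Fin n2) ≃ᵢ EuclideanSpace ℝ (Fin n2))) →*
        (EuclideanSpace ℝ (Fin (n1 + n2)) ≃ᵢ EuclideanSpace ℝ (Fin (n1 + n2))) :=
      (conjIsomHom E.symm).comp (prodIsomHom _ _) with hφ
    have hinj : Function.Injective φ :=
      (conjIsomHom_injective E.symm).comp (prodIsomHom_injective _ _)
    refine ⟨(G1.prod G2).map φ, α1 + α2, ⟨?_⟩, ?_⟩
    · exact (Subgroup.equivMapOfInjective _ φ hinj).symm.trans
        ((Subgroup.prodEquiv G1 G2).trans ((e1.prodCongr e2).trans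
          ((MulEquiv.prodMultiplicative _ _).symm.trans
            (AddEquiv.toMultiplicative (finAddArrowAddEquiv p α1 α2)))))
    · refine ⟨E.symm (WithLp.toLp 2 (v1, v2) :
        WithLp 2 (EuclideanSpace ℝ (Fin n1) × EuclideanSpace ℝ (Fin n2))), fun z => ?_⟩
      obtain ⟨g1, hg1, hg1v⟩ := hv1 (fx z)
      obtain ⟨g2, hg2, hg2v⟩ := hv2 (fy z)
      refine ⟨φ (g1, g2), Subgroup.mem_map.2 ⟨(g1, g2),
        Subgroup.mem_prod.2 ⟨hg1, hg2⟩, rfl⟩, ?_⟩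
      show E.symm (prodIsom g1 g2 (E.symm.symm (E.symm (WithLp.toLp 2 (v1, v2) :
        WithLp 2 (EuclideanSpace ℝ (Fin n1) × EuclideanSpace ℝ (Fin n2)))))) = _
      rw [IsometryEquiv.symm_symm, E.apply_symm_apply]
      show E.symm (WithLp.toLp 2 (g1 v1, g2 v2) :
        WithLp 2 (EuclideanSpace ℝ (Fin n1) × EuclideanSpace ℝ (Fin n2))) = _
      rw [hg1v, hg2v]
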